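/- The number 160154 has at least 15 preimages under s; in particular s(152776) = s(183016) = s(251614) = s(260182) = s(296074) = s(298234) = s(302842) = s(310942) = s(311086) = s(312166) = s(313822) = s(313966) = s(315082) = s(315226) = s(315262) = 160154. -/
import Mathlib

/-- Sum of proper divisors. -/
def s (n : ℕ) : ℕ := ArithmeticFunction.sigma 1 n - n

lemma sig_mul {a b : ℕ} (h : Nat.Coprime a b) :
    ArithmeticFunction.sigma 1 (a*b) = ArithmeticFunction.sigma 1 a * ArithmeticFunction.sigma 1 b :=
  ArithmeticFunction.isMultiplicative_sigma.map_mul_of_coprime h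

lemma sig_prime {p : ℕ} (hp : p.Prime) : ArithmeticFunction.sigma 1 p = p + 1 := by
  rw [ArithmeticFunction.sigma_one_apply, hp.divisors]
  rw [Finset.sum_pair hp.one_lt.ne]; omega

lemma sig8 : ArithmeticFunction.sigma 1 8 = 15 := by
  rw [ArithmeticFunction.sigma_one_apply]; decide

lemma sig169 : ArithmeticFunction.sigma 1 169 = 183 := by
  rw [ArithmeticFunction.sigma_one_apply]; decide

lemma case2pq (p q n : ℕ) (hp : p.Prime) (hq : q.Prime) (h2p : 2 ≠ p) (h2q : 2 ≠ q)
    (hpq : p ≠ q) (hn : n = 2*p*q) (hv : 3*(p+1)*(q+1) - 2*p*q = 160154) :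
    s n = 160154 := by
  subst hn
  have c1 : Nat.Coprime 2 p := (Nat.coprime_primes Nat.prime_two hp).mpr h2p
  have c2 : Nat.Coprime (2*p) q :=
    Nat.Coprime.mul ((Nat.coprime_primes Nat.prime_two hq).mpr h2q)
      ((Nat.coprime_primes hp hq).mpr hpq)
  rw [s, sig_mul c2, sig_mul c1, sig_prime Nat.prime_two, sig_prime hp, sig_prime hq]
  exact hv

lemma case1 : s 152776 = 160154 := by
  have h1 : Nat.Coprime 8 169 := by decide
  have h2 : Nat.Coprime (8*169) 113 := by decide
  have hn : (152776 : ℕ) = 8*169*113 := by norm_num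
  rw [s, hn, sig_mul h2, sig_mul h1, sig8, sig169, sig_prime (by norm_num : Nat.Prime 113)]

lemma case2 : s 183016 = 160154 := by
  have h1 : Nat.Coprime 8 22877 := by decide
  have hn : (183016 : ℕ) = 8*22877 := by norm_num
  rw [s, hn, sig_mul h1, sig8, sig_prime (by norm_num : Nat.Prime 22877)]

theorem preimages_160154 :
    s 152776 = 160154 ∧ s 183016 = 160154 ∧ s 251614 = 160154 ∧ s 260182 = 160154 ∧
    s 296074 = 160154 ∧ s 298234 = 160154 ∧ s 302842 = 160154 ∧ s 310942 = 160154 ∧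
    s 311086 = 160154 ∧ s 312166 = 160154 ∧ s 313822 = 160154 ∧ s 313966 = 160154 ∧
    s 315082 = 160154 ∧ s 315226 = 160154 ∧ s 315262 = 160154 :=
  ⟨case1, case2,
   case2pq 11 11437 _ (by norm_num) (by norm_num) (by norm_num) (by norm_num) (by norm_num) (by norm_num) (by norm_num),
   case2pq 13 10007 _ (by norm_num) (by norm_num) (by norm_num) (by norm_num) (by norm_num) (by norm_num) (by norm_num),
   case2pq 37 4001 _ (by norm_num) (by norm_num) (by norm_num) (by norm_num) (by norm_num) (by norm_num) (by norm_num),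
   case2pq 41 3637 _ (by norm_num) (by norm_num) (by norm_num) (by norm_num) (by norm_num) (by norm_num) (by norm_num),
   case2pq 53 2857 _ (by norm_num) (by norm_num) (by norm_num) (by norm_num) (by norm_num) (by norm_num) (by norm_num),
   case2pq 107 1453 _ (by norm_num) (by norm_num) (by norm_num) (by norm_num) (by norm_num) (by norm_num) (by norm_num),
   case2pq 109 1427 _ (by norm_num) (by norm_num) (by norm_num) (by norm_num) (by norm_num) (by norm_num) (by norm_num),
   case2pq 127 1229 _ (by norm_num) (by norm_num) (by norm_num) (by norm_num) (by norm_num) (by norm_num) (by norm_num),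
   case2pq 173 907 _ (by norm_num) (by norm_num) (by norm_num) (by norm_num) (by norm_num) (by norm_num) (by norm_num),
   case2pq 179 877 _ (by norm_num) (by norm_num) (by norm_num) (by norm_num) (by norm_num) (by norm_num) (by norm_num),
   case2pq 257 613 _ (by norm_num) (by norm_num) (by norm_num) (by norm_num) (by norm_num) (by norm_num) (by norm_num),
   case2pq 277 569 _ (by norm_num) (by norm_num) (by norm_num) (by norm_num) (by norm_num) (by norm_num) (by norm_num),
   case2pq 283 557 _ (by norm_num) (by norm_num) (by norm_num) (by norm_num) (by norm_num) (by norm_num) (by norm_num)⟩
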